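/- Let U ∈ ℝ^{n×r} satisfy the strong incoherence property: |⟨e_i, UUᵀe_j⟩ − (r/n)·1_{i=j}| ≤ μ₁√r/n for all 1 ≤ i, j ≤ n. Then for every subset S ⊆ {1,…,n} with |S| = d, the matrix U_S ∈ ℝ^{r×d} whose columns are the rows U^k of U for k ∈ S satisfies ‖U_S‖² ≤ (r + d·μ₁·√r)/n, where ‖·‖ denotes the spectral norm. -/

import Mathlib

open Matrix
open scoped BigOperators

noncomputable section

/-- Euclidean norm of a vector. -/
def vecNorm {β : Type*} [Fintype β] (x : β → ℝ) : ℝ :=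
  Real.sqrt (∑ i, x i ^ 2)

/-- Spectral norm (largest singular value) of a real matrix. -/
def specNorm {α β : Type*} [Fintype α] [Fintype β] (A : Matrix α β ℝ) : ℝ :=
  sSup {c | ∃ x : β → ℝ, vecNorm x ≤ 1 ∧ c = vecNorm (A.mulVec x)}

/-- Second largest singular value of a real matrix (Courant–Fischer characterization). -/
def sigma2 {α β : Type*} [Fintype α] [Fintype β] (A : Matrix α β ℝ) : ℝ :=
  ⨅ v : β → ℝ, sSup {c | ∃ x : β → ℝ,
    vecNorm x ≤ 1 ∧ (∑ i, v i * x i) = 0 ∧ c = vecNorm (A.mulVec x)}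

/-- Frobenius norm. -/
def frobNorm {α β : Type*} [Fintype α] [Fintype β] (A : Matrix α β ℝ) : ℝ :=
  Real.sqrt (∑ i, ∑ j, A i j ^ 2)

/-- Nuclear norm: the sum of the singular values, i.e. the trace of `√(AᵀA)`. -/
def nuclearNorm {α β : Type*} [Fintype α] [Fintype β] [DecidableEq β]
    (A : Matrix α β ℝ) : ℝ :=
  let hA := Matrix.posSemidef_conjTranspose_mul_self A
  (hA.1.eigenvectorUnitary.1 * Matrix.diagonal ((√·) ∘ hA.1.eigenvalues) *
    (star hA.1.eigenvectorUnitary : Matrix β β ℝ)).trace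

/-- The sampling operator `P_Ω`. -/
def sampl {n : ℕ} (Ω : Finset (Fin n × Fin n)) (M : Matrix (Fin n) (Fin n) ℝ) :
    Matrix (Fin n) (Fin n) ℝ :=
  Matrix.of fun i j => if (i, j) ∈ Ω then M i j else 0

/-- The biadjacency matrix `G` of the bipartite graph with edge set `Ω`. -/
def biadj {n : ℕ} (Ω : Finset (Fin n × Fin n)) : Matrix (Fin n) (Fin n) ℝ :=
  Matrix.of fun i j => if (i, j) ∈ Ω then (1 : ℝ) else 0

/-- `Ω` is the edge set of a `d`-regular bipartite graph: every row and every column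
of `G` has exactly `d` ones. -/
def RegularSampling {n : ℕ} (Ω : Finset (Fin n × Fin n)) (d : ℕ) : Prop :=
  (∀ i : Fin n, (Finset.univ.filter fun j => (i, j) ∈ Ω).card = d) ∧
  (∀ j : Fin n, (Finset.univ.filter fun i => (i, j) ∈ Ω).card = d)

/-- Assumption G1: the all-ones vector is a top left- and right-singular vector of `G`,
with `σ₁(G) = d`. -/
def AssumptionG1 {n : ℕ} (Ω : Finset (Fin n × Fin n)) (d : ℕ) : Prop :=
  specNorm (biadj Ω) = d ∧
  (biadj Ω).mulVec (fun _ => 1) = (fun _ => (d : ℝ)) ∧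
  Matrix.vecMul (fun _ => 1) (biadj Ω) = (fun _ => (d : ℝ))

/-- Assumption G2: `σ₂(G) ≤ C·√d`. -/
def AssumptionG2 {n : ℕ} (Ω : Finset (Fin n × Fin n)) (d : ℕ) (C : ℝ) : Prop :=
  sigma2 (biadj Ω) ≤ C * Real.sqrt d

/-- Assumption A1 (`μ₀`-incoherence) for one factor: every row `U^i` satisfies
`‖U^i‖² ≤ μ₀ r / n`. -/
def IncoherentRows {n r : ℕ} (U : Matrix (Fin n) (Fin r) ℝ) (μ₀ : ℝ) : Prop :=
  ∀ i : Fin n, (∑ k, U i k ^ 2) ≤ μ₀ * r / n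

/-- Assumption A2 (strong incoherence with parameter `δ`) for one factor:
for every `S` with `|S| = d`, `‖(n/d)·∑_{k∈S} U^k (U^k)ᵀ − I‖ ≤ δ`. -/
def StrongIncoherence {n r : ℕ} (U : Matrix (Fin n) (Fin r) ℝ) (d : ℕ) (δ : ℝ) : Prop :=
  ∀ S : Finset (Fin n), S.card = d →
    specNorm (((n : ℝ) / (d : ℝ)) • (∑ k ∈ S, Matrix.vecMulVec (U k) (U k)) - 1) ≤ δ

/-- `M = U · diagonal s · Vᵀ` is a thin SVD of the rank-`r` matrix `M`. -/
def IsThinSVD {n r : ℕ} (M : Matrix (Fin n) (Fin n) ℝ)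
    (U : Matrix (Fin n) (Fin r) ℝ) (s : Fin r → ℝ) (V : Matrix (Fin n) (Fin r) ℝ) : Prop :=
  Uᵀ * U = 1 ∧ Vᵀ * V = 1 ∧ (∀ i, 0 < s i) ∧ M = U * Matrix.diagonal s * Vᵀ

/-- The projection `P_T` onto the subspace `T` spanned by matrices `UXᵀ` and `YVᵀ`. -/
def projT {n r : ℕ} (U V : Matrix (Fin n) (Fin r) ℝ) (Z : Matrix (Fin n) (Fin n) ℝ) :
    Matrix (Fin n) (Fin n) ℝ :=
  U * Uᵀ * Z + Z * (V * Vᵀ) - U * Uᵀ * Z * (V * Vᵀ)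

/-- The projection `P_{T⊥}` onto the orthogonal complement of `T`. -/
def projTperp {n r : ℕ} (U V : Matrix (Fin n) (Fin r) ℝ) (Z : Matrix (Fin n) (Fin n) ℝ) :
    Matrix (Fin n) (Fin n) ℝ :=
  (1 - U * Uᵀ) * Z * (1 - V * Vᵀ)

end

/-- under SIP, the submatrix `U_S` of rows of `U` indexed by `S`
satisfies `‖U_S‖² ≤ (r + d μ₁ √r)/n`. -/
theorem stmt_5 {n r d : ℕ} {μ₁ : ℝ} (U : Matrix (Fin n) (Fin r) ℝ)
    (hSIP : ∀ i j : Fin n,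
      |(U * Uᵀ) i j - (if i = j then (r : ℝ) / n else 0)| ≤ μ₁ * Real.sqrt r / n)
    (S : Finset (Fin n)) (hS : S.card = d) :
    specNorm (Matrix.of fun (a : Fin r) (k : {x // x ∈ S}) => U k.1 a) ^ 2 ≤
      ((r : ℝ) + d * μ₁ * Real.sqrt r) / n := by
    classical
  set A : Matrix (Fin r) {x // x ∈ S} ℝ :=
    Matrix.of fun (a : Fin r) (k : {x // x ∈ S}) => U k.1 a with hA
  rcases Nat.eq_zero_or_pos n with hn | hn
  · -- n = 0 : everything is empty
    subst hn
    have hmv : ∀ x : {k // k ∈ S} → ℝ, A.mulVec x = 0 := by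
      intro x; funext a
      simp [Matrix.mulVec, dotProduct]
    have hK : {c | ∃ x : {k // k ∈ S} → ℝ, vecNorm x ≤ 1 ∧ c = vecNorm (A.mulVec x)} = {0} := by
      ext c
      constructor
      · rintro ⟨x, -, rfl⟩
        simp [hmv, vecNorm]
      · rintro rfl
        exact ⟨0, by simp [vecNorm], by simp [hmv, vecNorm]⟩
    have : specNorm A = 0 := by
      rw [specNorm, hK, csSup_singleton]
    rw [this]
    norm_num
  · -- main case
    have hc0 : 0 ≤ μ₁ * Real.sqrt r / n := le_trans (abs_nonneg _) (hSIP ⟨0, hn⟩ ⟨0, hn⟩)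
    have hn0 : (0:ℝ) < n := by exact_mod_cast hn
    have hμr : 0 ≤ μ₁ * Real.sqrt r := by
      have := mul_nonneg hc0 hn0.le
      rwa [div_mul_cancel₀ _ hn0.ne'] at this
    set B : ℝ := ((r : ℝ) + d * μ₁ * Real.sqrt r) / n with hBdef
    have hB0 : 0 ≤ B := by
      apply div_nonneg _ hn0.le
      have : (0:ℝ) ≤ d * (μ₁ * Real.sqrt r) := mul_nonneg (by positivity) hμr
      nlinarith [Nat.cast_nonneg (α := ℝ) r]
    have key : ∀ x : {k // k ∈ S} → ℝ, vecNorm x ≤ 1 →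
        vecNorm (A.mulVec x) ≤ Real.sqrt B := by
      intro x hx
      have hsum0 : (0:ℝ) ≤ ∑ k, x k ^ 2 := by positivity
      have hx2 : ∑ k, x k ^ 2 ≤ 1 := by
        have h1 : Real.sqrt (∑ k, x k ^ 2) ≤ 1 := hx
        nlinarith [Real.sq_sqrt hsum0, Real.sqrt_nonneg (∑ k, x k ^ 2)]
      have hnorm : vecNorm (A.mulVec x)
          = Real.sqrt (∑ a, (∑ k, U k.1 a * x k) ^ 2) := by
        simp [vecNorm, Matrix.mulVec, dotProduct, hA]
      rw [hnorm]
      apply Real.sqrt_le_sqrt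
      set c : ℝ := μ₁ * Real.sqrt r / n with hcdef
      set t : ℝ := (r : ℝ) / n with htdef
      have ht0 : 0 ≤ t := by positivity
      have hg : ∀ k l : {x // x ∈ S},
          |(U * Uᵀ) k.1 l.1| ≤ (if k = l then t else 0) + c := by
        intro k l
        have h := hSIP k.1 l.1
        have hite : (if k.1 = l.1 then (r:ℝ)/n else 0) = (if k = l then t else 0) := by
          by_cases hkl : k = l
          · simp [hkl, htdef]
          · have : ¬ (k.1 = l.1) := fun hh => hkl (Subtype.ext hh)
            simp [hkl, this]
        have habs : |(U * Uᵀ) k.1 l.1|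
            ≤ |(if k.1 = l.1 then (r:ℝ)/n else 0)| + |(U * Uᵀ) k.1 l.1 - (if k.1 = l.1 then (r:ℝ)/n else 0)| := by
          have := abs_add_le (if k.1 = l.1 then (r:ℝ)/n else 0)
            ((U * Uᵀ) k.1 l.1 - (if k.1 = l.1 then (r:ℝ)/n else 0))
          simpa using this
        have hiabs : |(if k.1 = l.1 then (r:ℝ)/n else 0)| = (if k = l then t else 0) := by
          rw [abs_of_nonneg (by positivity), hite]
        calc |(U * Uᵀ) k.1 l.1|
            ≤ |(if k.1 = l.1 then (r:ℝ)/n else 0)| + |(U * Uᵀ) k.1 l.1 - (if k.1 = l.1 then (r:ℝ)/n else 0)| := habs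
          _ ≤ (if k = l then t else 0) + c := by rw [hiabs]; exact add_le_add le_rfl (h.trans_eq rfl)
      calc ∑ a, (∑ k, U k.1 a * x k) ^ 2
          = ∑ k, ∑ l, (x k * x l) * ((U * Uᵀ) k.1 l.1) := by
            simp_rw [sq, Finset.sum_mul_sum]
            rw [Finset.sum_comm]
            refine Finset.sum_congr rfl fun k _ => ?_
            rw [Finset.sum_comm]
            refine Finset.sum_congr rfl fun l _ => ?_
            rw [Matrix.mul_apply, Finset.mul_sum]
            exact Finset.sum_congr rfl fun a _ => by simp [Matrix.transpose_apply]; ring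
        _ ≤ ∑ k, ∑ l, |x k| * |x l| * (((if k = l then t else 0)) + c) := by
            refine Finset.sum_le_sum fun k _ => Finset.sum_le_sum fun l _ => ?_
            calc (x k * x l) * ((U * Uᵀ) k.1 l.1)
                ≤ |(x k * x l) * ((U * Uᵀ) k.1 l.1)| := le_abs_self _
              _ = |x k| * |x l| * |(U * Uᵀ) k.1 l.1| := by rw [abs_mul, abs_mul]
              _ ≤ |x k| * |x l| * ((if k = l then t else 0) + c) := by
                  apply mul_le_mul_of_nonneg_left (hg k l) (by positivity)
        _ = t * (∑ k, x k ^ 2) + c * (∑ k, |x k|) ^ 2 := by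
            simp_rw [mul_add, Finset.sum_add_distrib]
            congr 1
            · rw [Finset.mul_sum]
              refine Finset.sum_congr rfl fun k _ => ?_
              rw [Finset.sum_eq_single k]
              · simp [sq_abs, sq]; ring
              · intro l _ hl
                simp [Ne.symm hl]
              · simp
            · rw [sq, Finset.sum_mul_sum, Finset.mul_sum]
              refine Finset.sum_congr rfl fun k _ => ?_
              rw [Finset.mul_sum]
              exact Finset.sum_congr rfl fun l _ => by ring
        _ ≤ t * 1 + c * (d * 1) := by
            have hcs : (∑ k, |x k|) ^ 2 ≤ (d:ℝ) * (∑ k, x k ^ 2) := by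
              have := sq_sum_le_card_mul_sum_sq (s := Finset.univ) (f := fun k : {x // x ∈ S} => |x k|)
              simpa [sq_abs, Finset.card_univ, Fintype.card_coe, hS] using this
            have h1 : c * (∑ k, |x k|) ^ 2 ≤ c * ((d:ℝ) * (∑ k, x k ^ 2)) :=
              mul_le_mul_of_nonneg_left hcs hc0
            have h2 : (d:ℝ) * (∑ k, x k ^ 2) ≤ (d:ℝ) * 1 :=
              mul_le_mul_of_nonneg_left hx2 (by positivity)
            have h3 : t * (∑ k, x k ^ 2) ≤ t * 1 := mul_le_mul_of_nonneg_left hx2 ht0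
            nlinarith [mul_le_mul_of_nonneg_left h2 hc0]
        _ = B := by
            rw [hBdef, htdef, hcdef]
            field_simp
    have hmem : (0:ℝ) ∈ {c | ∃ x : {k // k ∈ S} → ℝ, vecNorm x ≤ 1 ∧ c = vecNorm (A.mulVec x)} :=
      ⟨0, by simp [vecNorm], by simp [vecNorm]⟩
    have hbdd : ∀ c ∈ {c | ∃ x : {k // k ∈ S} → ℝ, vecNorm x ≤ 1 ∧ c = vecNorm (A.mulVec x)},
        c ≤ Real.sqrt B := by
      rintro c ⟨x, hx, rfl⟩
      exact key x hx
    have hle : specNorm A ≤ Real.sqrt B := Real.sSup_le hbdd (Real.sqrt_nonneg B)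
    have h0 : 0 ≤ specNorm A :=
      le_csSup ⟨Real.sqrt B, hbdd⟩ hmem
    calc specNorm A ^ 2 ≤ Real.sqrt B ^ 2 := pow_le_pow_left₀ h0 hle 2
      _ = B := Real.sq_sqrt hB0
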